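/- Let k be a field of characteristic p > 0 and suppose u, v ∈ k⟦x,y⟧ satisfy u = x^p(c₀ + f₀ y + x Λ₀) and v = τ₀(y) y^p + e₀ x + x Ω₀ with c₀, f₀, e₀ ∈ k nonzero, τ₀(y) ∈ k⟦y⟧ a unit power series, Λ₀, Ω₀ ∈ k⟦x,y⟧ and Ω₀ with zero constant term. Then for every one-variable power series ψ(T) ∈ k⟦T⟧ with ψ(0) = 0, the series u − ψ(v) ∈ k⟦x,y⟧ is nonzero, and if r denotes its order (the least total degree of a monomial occurring with nonzero coefficient), then the coefficient of y^r in u − ψ(v) is zero; equivalently, x divides the leading form (lowest-degree homogeneous part) of u − ψ(v). -/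

import Mathlib

open MvPowerSeries

/-- The maximal ideal of the two-variable formal power series ring
`k⟦x,y⟧` over a field `k`: the series with zero constant term. -/
noncomputable def psMaxIdeal (k : Type) [Field k] : Ideal (MvPowerSeries (Fin 2) k) :=
  RingHom.ker (MvPowerSeries.constantCoeff (σ := Fin 2) (R := k))

/-- `σ : k⟦x,y⟧ →+* k⟦X,Y⟧` is the substitution homomorphism `x ↦ a`,
`y ↦ b`: a `k`-algebra homomorphism, continuous for the maximal-adic
topologies, sending the two variables to `a` and `b`.  (Such a continuous
`k`-algebra homomorphism is unique when it exists, namely when `a` and `b`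
have zero constant term.) -/
def IsSubstitutionHom (k : Type) [Field k]
    (σ : MvPowerSeries (Fin 2) k →+* MvPowerSeries (Fin 2) k)
    (a b : MvPowerSeries (Fin 2) k) : Prop :=
  (∀ c : k, σ (MvPowerSeries.C (σ := Fin 2) (R := k) c) = MvPowerSeries.C (σ := Fin 2) (R := k) c) ∧
  σ (MvPowerSeries.X 0) = a ∧ σ (MvPowerSeries.X 1) = b ∧
  ∀ n : ℕ, ∃ m : ℕ, ∀ F ∈ (psMaxIdeal k) ^ m, σ F ∈ (psMaxIdeal k) ^ n

/-- `ε : k⟦T⟧ →+* k⟦X,Y⟧` is the substitution homomorphism `T ↦ w`: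
a `k`-algebra homomorphism, continuous for the maximal-adic topologies,
sending `T` to `w`. -/
def IsSubstitutionHom₁ (k : Type) [Field k]
    (ε : PowerSeries k →+* MvPowerSeries (Fin 2) k)
    (w : MvPowerSeries (Fin 2) k) : Prop :=
  (∀ c : k, ε (PowerSeries.C (R := k) c) = MvPowerSeries.C (σ := Fin 2) (R := k) c) ∧
  ε PowerSeries.X = w ∧
  ∀ n : ℕ, ∃ m : ℕ,
    ∀ F ∈ (RingHom.ker (PowerSeries.constantCoeff (R := k))) ^ m, ε F ∈ (psMaxIdeal k) ^ n

namespace Stmt10Aux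

variable {k : Type} [Field k]

/-- "order at least `n`": every coefficient in total degree `< n` vanishes. -/
def OGE (n : ℕ) (F : MvPowerSeries (Fin 2) k) : Prop :=
  ∀ d : Fin 2 →₀ ℕ, d 0 + d 1 < n → MvPowerSeries.coeff (R := k) d F = 0

lemma OGE_zero (F : MvPowerSeries (Fin 2) k) : OGE 0 F :=
  fun _ hd => absurd hd (Nat.not_lt_zero _)

lemma OGE.mono {m n : ℕ} (h : m ≤ n) {F : MvPowerSeries (Fin 2) k}
    (hF : OGE n F) : OGE m F :=
  fun d hd => hF d (lt_of_lt_of_le hd h)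

lemma OGE.add {n : ℕ} {F G : MvPowerSeries (Fin 2) k} (hF : OGE n F) (hG : OGE n G) :
    OGE n (F + G) := by
  intro d hd
  rw [map_add, hF d hd, hG d hd, add_zero]

lemma OGE.mul {a b : ℕ} {F G : MvPowerSeries (Fin 2) k} (hF : OGE a F) (hG : OGE b G) :
    OGE (a + b) (F * G) := by
  classical
  intro d hd
  rw [MvPowerSeries.coeff_mul]
  apply Finset.sum_eq_zero
  rintro ⟨d1, d2⟩ hmem
  rw [Finset.HasAntidiagonal.mem_antidiagonal] at hmem
  have h0 : d1 0 + d2 0 = d 0 := by rw [← hmem]; simp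
  have h1 : d1 1 + d2 1 = d 1 := by rw [← hmem]; simp
  by_cases hca : d1 0 + d1 1 < a
  · rw [hF d1 hca, zero_mul]
  · have : d2 0 + d2 1 < b := by omega
    rw [hG d2 this, mul_zero]

lemma OGE.mul_right {a : ℕ} {F : MvPowerSeries (Fin 2) k} (hF : OGE a F)
    (G : MvPowerSeries (Fin 2) k) : OGE a (F * G) := by
  have := hF.mul (OGE_zero G)
  simpa using this

lemma OGE.pow {a : ℕ} {F : MvPowerSeries (Fin 2) k} (hF : OGE a F) (n : ℕ) :
    OGE (n * a) (F ^ n) := by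
  induction n with
  | zero => simpa using OGE_zero 1
  | succ n ih =>
      rw [pow_succ]
      have := ih.mul hF
      simpa [Nat.succ_mul] using this

lemma eq_zero_of_deg_zero {d : Fin 2 →₀ ℕ} (h : d 0 + d 1 = 0) : d = 0 := by
  have h0 : d 0 = 0 := by omega
  have h1 : d 1 = 0 := by omega
  ext i
  fin_cases i
  · simpa using h0
  · simpa using h1

lemma OGE_X (s : Fin 2) : OGE 1 (MvPowerSeries.X s : MvPowerSeries (Fin 2) k) := by
  classical
  intro d hd
  have hd0 : d = 0 := eq_zero_of_deg_zero (by omega)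
  subst hd0
  rw [MvPowerSeries.coeff_X, if_neg]
  intro h
  have := congrArg (fun f : Fin 2 →₀ ℕ => f s) h
  simp at this

lemma OGE_one_of_constantCoeff {F : MvPowerSeries (Fin 2) k}
    (h : MvPowerSeries.constantCoeff (σ := Fin 2) (R := k) F = 0) : OGE 1 F := by
  intro d hd
  have hd0 : d = 0 := eq_zero_of_deg_zero (by omega)
  subst hd0
  rwa [MvPowerSeries.coeff_zero_eq_constantCoeff]

lemma oge_of_mem_pow {n : ℕ} {F : MvPowerSeries (Fin 2) k}
    (h : F ∈ (psMaxIdeal k) ^ n) : OGE n F := by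
  induction n generalizing F with
  | zero => exact OGE_zero F
  | succ n ih =>
      rw [pow_succ] at h
      refine Submodule.mul_induction_on h ?_ ?_
      · intro a ha b hb
        exact (ih ha).mul (OGE_one_of_constantCoeff (RingHom.mem_ker.mp hb))
      · intro x y hx hy
        exact hx.add hy

lemma tail_mem {N : ℕ} {φ : PowerSeries k} (h : ∀ j < N, PowerSeries.coeff (R := k) j φ = 0) :
    φ ∈ (RingHom.ker (PowerSeries.constantCoeff (R := k))) ^ N := by
  obtain ⟨q, hq⟩ := PowerSeries.X_pow_dvd_iff.mpr h
  rw [hq]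
  refine Ideal.mul_mem_right _ _ (Ideal.pow_mem_pow ?_ N)
  simp [RingHom.mem_ker]

/-- The coefficients of `ε ψ` are computed by the finite sums `∑ bₙ vⁿ`. -/
lemma coeff_eps {ε : PowerSeries k →+* MvPowerSeries (Fin 2) k}
    {v : MvPowerSeries (Fin 2) k} (hε : IsSubstitutionHom₁ k ε v) (hv1 : OGE 1 v)
    (ψ : PowerSeries k) (d : Fin 2 →₀ ℕ) (D : ℕ) (hD : d 0 + d 1 ≤ D) :
    MvPowerSeries.coeff (R := k) d (ε ψ) =
      ∑ n ∈ Finset.range (D + 1),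
        PowerSeries.coeff (R := k) n ψ * MvPowerSeries.coeff (R := k) d (v ^ n) := by
  classical
  obtain ⟨M, hM⟩ := hε.2.2 (D + 1)
  set N := max M (D + 1) with hN
  set P : PowerSeries k :=
    ∑ n ∈ Finset.range N, PowerSeries.C (R := k) (PowerSeries.coeff (R := k) n ψ) * PowerSeries.X ^ n with hP
  have hPc : ∀ j < N, PowerSeries.coeff (R := k) j (ψ - P) = 0 := by
    intro j hj
    rw [map_sub, hP, map_sum]
    have : ∀ n ∈ Finset.range N,
        PowerSeries.coeff (R := k) j (PowerSeries.C (R := k) (PowerSeries.coeff (R := k) n ψ) * PowerSeries.X ^ n)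
          = if n = j then PowerSeries.coeff (R := k) n ψ else 0 := by
      intro n _
      rw [PowerSeries.coeff_C_mul, PowerSeries.coeff_X_pow]
      by_cases hnj : j = n <;> simp [hnj, eq_comm]
    rw [Finset.sum_congr rfl this, Finset.sum_ite_eq' (Finset.range N) j
      (fun n => PowerSeries.coeff (R := k) n ψ), if_pos (Finset.mem_range.mpr hj), sub_self]
  have htail : ε (ψ - P) ∈ (psMaxIdeal k) ^ (D + 1) :=
    hM _ (Ideal.pow_le_pow_right (le_max_left _ _) (tail_mem hPc))
  have htail0 : MvPowerSeries.coeff (R := k) d (ε (ψ - P)) = 0 :=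
    oge_of_mem_pow htail d (by omega)
  have hsplit : ε ψ = ε P + ε (ψ - P) := by rw [← map_add]; ring_nf
  have hεP : MvPowerSeries.coeff (R := k) d (ε P) =
      ∑ n ∈ Finset.range N, PowerSeries.coeff (R := k) n ψ * MvPowerSeries.coeff (R := k) d (v ^ n) := by
    rw [hP, map_sum, map_sum]
    refine Finset.sum_congr rfl ?_
    intro n _
    rw [map_mul, map_pow, hε.1, hε.2.1, MvPowerSeries.coeff_C_mul]
  have hshrink : ∑ n ∈ Finset.range N, PowerSeries.coeff (R := k) n ψ * MvPowerSeries.coeff (R := k) d (v ^ n)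
      = ∑ n ∈ Finset.range (D + 1),
          PowerSeries.coeff (R := k) n ψ * MvPowerSeries.coeff (R := k) d (v ^ n) := by
    refine (Finset.sum_subset (Finset.range_subset_range.mpr (le_max_right _ _)) ?_).symm
    intro n _ hn
    rw [Finset.mem_range, not_lt] at hn
    have : MvPowerSeries.coeff (R := k) d (v ^ n) = 0 := by
      have := hv1.pow n
      rw [mul_one] at this
      exact this d (by omega)
    rw [this, mul_zero]
  rw [hsplit, map_add, htail0, add_zero, hεP, hshrink]

/-- coefficient of a monomial not involving `x` in a multiple of `x` is zero -/
lemma coeff_X0_mul_zero {d : Fin 2 →₀ ℕ} (hd : d 0 = 0) (G : MvPowerSeries (Fin 2) k) :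
    MvPowerSeries.coeff (R := k) d (MvPowerSeries.X 0 * G) = 0 := by
  classical
  rw [MvPowerSeries.coeff_mul]
  apply Finset.sum_eq_zero
  rintro ⟨d1, d2⟩ hmem
  rw [Finset.HasAntidiagonal.mem_antidiagonal] at hmem
  have hmem' : d1 + d2 = d := hmem
  rw [MvPowerSeries.coeff_X, if_neg, zero_mul]
  rintro rfl
  have h0 : (1 : ℕ) + d2 0 = d 0 := by rw [← hmem']; simp
  omega

/-- L1: coefficients of `v ^ n` in total degree `≤ n`. -/
lemma coeff_v_pow {e₀ : k} {v g : MvPowerSeries (Fin 2) k}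
    (hvg : v = MvPowerSeries.C (σ := Fin 2) (R := k) e₀ * MvPowerSeries.X 0 + g) (hg : OGE 2 g)
    (n : ℕ) (d : Fin 2 →₀ ℕ) (hd : d 0 + d 1 ≤ n) :
    MvPowerSeries.coeff (R := k) d (v ^ n) =
      if d = Finsupp.single (0 : Fin 2) n then e₀ ^ n else 0 := by
  classical
  subst hvg
  rw [add_pow, map_sum]
  rw [Finset.sum_eq_single n]
  · rw [Nat.sub_self, pow_zero, mul_one, Nat.choose_self, Nat.cast_one, mul_one,
      mul_pow, ← map_pow, MvPowerSeries.coeff_C_mul, MvPowerSeries.coeff_X_pow]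
    by_cases hds : d = Finsupp.single (0 : Fin 2) n <;> simp [hds]
  · intro j hj hjn
    have hj' : j ≤ n := by
      rw [Finset.mem_range] at hj; omega
    have hCX : OGE 1 (MvPowerSeries.C (σ := Fin 2) (R := k) e₀ * MvPowerSeries.X 0) := by
      simpa using (OGE_zero (MvPowerSeries.C (σ := Fin 2) (R := k) e₀)).mul (OGE_X 0)
    have h1 : OGE j ((MvPowerSeries.C (σ := Fin 2) (R := k) e₀ * MvPowerSeries.X 0) ^ j) := by
      simpa using hCX.pow j
    have h3 := (h1.mul (hg.pow (n - j))).mul_right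
      ((n.choose j : ℕ) : MvPowerSeries (Fin 2) k)
    exact (h3.mono (show n + 1 ≤ j + (n - j) * 2 by omega)) d (by omega)
  · intro h
    exact absurd (Finset.mem_range.mpr (by omega)) h

/-- L2: pure-`y` coefficients of `v ^ n` in degree `< p n` vanish. -/
lemma coeff_y_v_pow {p : ℕ} {v T B : MvPowerSeries (Fin 2) k}
    (hvg : v = T * (MvPowerSeries.X 1) ^ p + MvPowerSeries.X 0 * B)
    (n l : ℕ) (hl : l < p * n) :
    MvPowerSeries.coeff (R := k) (Finsupp.single (1 : Fin 2) l) (v ^ n) = 0 := by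
  classical
  subst hvg
  rw [add_pow, map_sum]
  apply Finset.sum_eq_zero
  intro j hj
  rw [Finset.mem_range] at hj
  by_cases hjn : j = n
  · subst hjn
    rw [Nat.sub_self, pow_zero, mul_one, Nat.choose_self, Nat.cast_one, mul_one,
      mul_pow, ← pow_mul, MvPowerSeries.X_pow_eq, MvPowerSeries.coeff_mul_monomial,
      if_neg]
    rw [Finsupp.single_le_iff, Finsupp.single_eq_same]
    omega
  · obtain ⟨msub, hmsub⟩ : ∃ msub, n - j = msub + 1 := ⟨n - j - 1, by omega⟩
    have : (T * MvPowerSeries.X 1 ^ p) ^ j * (MvPowerSeries.X 0 * B) ^ (n - j) *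
          ((n.choose j : ℕ) : MvPowerSeries (Fin 2) k)
        = MvPowerSeries.X 0 *
          (B * (T * MvPowerSeries.X 1 ^ p) ^ j * (MvPowerSeries.X 0 * B) ^ msub *
            ((n.choose j : ℕ) : MvPowerSeries (Fin 2) k)) := by
      rw [hmsub, pow_succ]
      ring
    rw [this, coeff_X0_mul_zero (by simp)]

lemma s00 (n : ℕ) : (Finsupp.single (0 : Fin 2) n) 0 = n := Finsupp.single_eq_same

lemma s01 (n : ℕ) : (Finsupp.single (0 : Fin 2) n) 1 = 0 :=
  Finsupp.single_eq_of_ne (by decide)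

lemma s10 (n : ℕ) : (Finsupp.single (1 : Fin 2) n) 0 = 0 :=
  Finsupp.single_eq_of_ne (by decide)

lemma s11 (n : ℕ) : (Finsupp.single (1 : Fin 2) n) 1 = n := Finsupp.single_eq_same

lemma single0_ne_single0 {a b : ℕ} (h : a ≠ b) :
    Finsupp.single (0 : Fin 2) a ≠ Finsupp.single (0 : Fin 2) b := by
  intro he
  exact h (by simpa [s00] using congrArg (fun f : Fin 2 →₀ ℕ => f 0) he)

lemma d1_ne_single0 (p b : ℕ) :
    Finsupp.single (0 : Fin 2) p + Finsupp.single (1 : Fin 2) 1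
      ≠ Finsupp.single (0 : Fin 2) b := by
  intro he
  have := congrArg (fun f : Fin 2 →₀ ℕ => f 1) he
  simp [s01, s11] at this

lemma deg_add (a b : ℕ) :
    ((Finsupp.single (0 : Fin 2) a + Finsupp.single (1 : Fin 2) b : Fin 2 →₀ ℕ)) 0
      + ((Finsupp.single (0 : Fin 2) a + Finsupp.single (1 : Fin 2) b : Fin 2 →₀ ℕ)) 1
      = a + b := by
  rw [Finsupp.add_apply, Finsupp.add_apply, s00, s01, s10, s11]
  omega

end Stmt10Aux

open Stmt10Aux in
theorem stmt10 (k : Type) [Field k] (p : ℕ) (hp : p.Prime) [CharP k p]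
    (u v Λ Ω T : MvPowerSeries (Fin 2) k) (c₀ f₀ e₀ : k)
    (hc : c₀ ≠ 0) (hf : f₀ ≠ 0) (he : e₀ ≠ 0)
    -- `T` is a unit power series in `y` alone (`τ₀(y)`):
    (hTy : ∀ d : Fin 2 →₀ ℕ, d 0 ≠ 0 → MvPowerSeries.coeff (R := k) d T = 0)
    (hTu : MvPowerSeries.constantCoeff (σ := Fin 2) (R := k) T ≠ 0)
    (hΩ : MvPowerSeries.constantCoeff (σ := Fin 2) (R := k) Ω = 0)
    -- `u = x^p (c₀ + f₀ y + x Λ₀)`: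
    (hu : u = (MvPowerSeries.X 0) ^ p *
      (MvPowerSeries.C (σ := Fin 2) (R := k) c₀ + MvPowerSeries.C (σ := Fin 2) (R := k) f₀ * MvPowerSeries.X 1
        + MvPowerSeries.X 0 * Λ))
    -- `v = τ₀(y) y^p + e₀ x + x Ω₀`:
    (hv : v = T * (MvPowerSeries.X 1) ^ p
      + MvPowerSeries.C (σ := Fin 2) (R := k) e₀ * MvPowerSeries.X 0 + MvPowerSeries.X 0 * Ω)
    (ψ : PowerSeries k) (hψ : PowerSeries.constantCoeff (R := k) ψ = 0)
    (ε : PowerSeries k →+* MvPowerSeries (Fin 2) k)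
    (hε : IsSubstitutionHom₁ k ε v) :
    u - ε ψ ≠ 0 ∧
    ∀ r : ℕ,
      -- if `r` is the order of `u - ψ(v)` …
      ((∀ d : Fin 2 →₀ ℕ, d 0 + d 1 < r → MvPowerSeries.coeff (R := k) d (u - ε ψ) = 0) ∧
        (∃ d : Fin 2 →₀ ℕ, d 0 + d 1 = r ∧ MvPowerSeries.coeff (R := k) d (u - ε ψ) ≠ 0)) →
      -- … then the coefficient of `y^r` in `u - ψ(v)` is zero:
      MvPowerSeries.coeff (R := k) (Finsupp.single (1 : Fin 2) r) (u - ε ψ) = 0 := by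
  classical
  have hp2 : 2 ≤ p := hp.two_le
  -- order facts about the building blocks
  have hΩ1 : OGE 1 Ω := OGE_one_of_constantCoeff hΩ
  have hg : OGE 2 (T * (MvPowerSeries.X 1) ^ p + MvPowerSeries.X 0 * Ω) := by
    have h1 : OGE p ((MvPowerSeries.X 1 : MvPowerSeries (Fin 2) k) ^ p) := by
      simpa using (OGE_X (k := k) 1).pow p
    have h2 : OGE 2 (T * (MvPowerSeries.X 1) ^ p) := by
      simpa using (OGE_zero T).mul (h1.mono hp2)
    have h3 : OGE 2 (MvPowerSeries.X 0 * Ω) := (OGE_X 0).mul hΩ1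
    exact h2.add h3
  have hvg : v = MvPowerSeries.C (σ := Fin 2) (R := k) e₀ * MvPowerSeries.X 0
      + (T * (MvPowerSeries.X 1) ^ p + MvPowerSeries.X 0 * Ω) := by
    rw [hv]; ring
  have hvB : v = T * (MvPowerSeries.X 1) ^ p
      + MvPowerSeries.X 0 * (MvPowerSeries.C (σ := Fin 2) (R := k) e₀ + Ω) := by
    rw [hv]; ring
  have hCX : OGE 1 (MvPowerSeries.C (σ := Fin 2) (R := k) e₀ * MvPowerSeries.X 0) := by
    simpa using (OGE_zero (MvPowerSeries.C (σ := Fin 2) (R := k) e₀)).mul (OGE_X 0)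
  have hv1 : OGE 1 v := by
    rw [hvg]
    exact hCX.add (hg.mono one_le_two)
  -- coefficients of u
  have hu_low : ∀ d : Fin 2 →₀ ℕ, d 0 < p → MvPowerSeries.coeff (R := k) d u = 0 := by
    intro d hd
    rw [hu, MvPowerSeries.X_pow_eq, MvPowerSeries.coeff_monomial_mul, if_neg]
    rw [Finsupp.single_le_iff]
    omega
  have hu_xp : MvPowerSeries.coeff (R := k) (Finsupp.single (0 : Fin 2) p) u = c₀ := by
    rw [hu, MvPowerSeries.X_pow_eq, MvPowerSeries.coeff_monomial_mul, if_pos le_rfl,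
      tsub_self, one_mul]
    rw [MvPowerSeries.coeff_zero_eq_constantCoeff]
    simp [map_add, map_mul]
  have hu_d1 : MvPowerSeries.coeff (R := k)
      (Finsupp.single (0 : Fin 2) p + Finsupp.single (1 : Fin 2) 1) u = f₀ := by
    rw [hu, MvPowerSeries.X_pow_eq, MvPowerSeries.coeff_monomial_mul,
      if_pos (self_le_add_right _ _), add_tsub_cancel_left, one_mul]
    rw [map_add, map_add, MvPowerSeries.coeff_C, if_neg, MvPowerSeries.coeff_C_mul,
      MvPowerSeries.coeff_X, if_pos rfl, coeff_X0_mul_zero (s10 1)]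
    · ring
    · intro h
      have := congrArg (fun f : Fin 2 →₀ ℕ => f 1) h
      simp [s11] at this
  -- coefficient extraction for ε ψ
  have hcoeff := coeff_eps hε hv1 ψ
  by_cases hψ0 : ψ = 0
  · subst hψ0
    rw [map_zero, sub_zero]
    constructor
    · intro h0
      apply hc
      rw [← hu_xp, h0, map_zero]
    · intro r _
      exact hu_low _ (by rw [s10]; exact hp.pos)
  · -- ψ ≠ 0 : pick out the order m of ψ
    have hex : ∃ n, PowerSeries.coeff (R := k) n ψ ≠ 0 := by
      by_contra hno
      push_neg at hno
      exact hψ0 (PowerSeries.ext fun n => by simpa using hno n)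
    obtain ⟨m, hbm, hlow⟩ : ∃ m, PowerSeries.coeff (R := k) m ψ ≠ 0 ∧
        ∀ j < m, PowerSeries.coeff (R := k) j ψ = 0 := by
      refine ⟨Nat.find hex, Nat.find_spec hex, fun j hj => ?_⟩
      by_contra hne
      exact Nat.find_min hex hj hne
    have hm1 : 1 ≤ m := by
      rcases Nat.eq_zero_or_pos m with h0 | h1
      · exfalso
        apply hbm
        rw [h0]
        simpa using hψ
      · exact h1
    -- a monomial of total degree < p * m with nonzero coefficient in u - ε ψ
    have key : ∃ dstar : Fin 2 →₀ ℕ,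
        MvPowerSeries.coeff (R := k) dstar (u - ε ψ) ≠ 0 ∧ dstar 0 + dstar 1 < p * m := by
      rcases lt_trichotomy m p with hmp | hmp | hmp
      · -- m < p : use x^m
        refine ⟨Finsupp.single (0 : Fin 2) m, ?_, ?_⟩
        · have hεc : MvPowerSeries.coeff (R := k) (Finsupp.single (0 : Fin 2) m) (ε ψ)
              = PowerSeries.coeff (R := k) m ψ * e₀ ^ m := by
            rw [hcoeff _ m (by rw [s00, s01]; omega)]
            rw [Finset.sum_eq_single m]
            · rw [coeff_v_pow hvg hg m _ (by rw [s00, s01]; omega), if_pos rfl]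
            · intro n hn hnm
              rw [Finset.mem_range] at hn
              rw [hlow n (by omega), zero_mul]
            · intro h
              exact absurd (Finset.mem_range.mpr (by omega)) h
          rw [map_sub, hεc, hu_low _ (by rw [s00]; omega), zero_sub, neg_ne_zero]
          exact mul_ne_zero hbm (pow_ne_zero _ he)
        · rw [s00, s01]
          nlinarith
      · -- m = p : use x^p y, whose coefficient in u - ε ψ is f₀
        subst hmp
        refine ⟨Finsupp.single (0 : Fin 2) m + Finsupp.single (1 : Fin 2) 1, ?_, ?_⟩
        · haveI : Fact m.Prime := ⟨hp⟩
          haveI : CharP (MvPowerSeries (Fin 2) k) m :=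
            charP_of_injective_ringHom (f := MvPowerSeries.C (σ := Fin 2) (R := k))
              (fun a b hab => by
                simpa using congrArg (MvPowerSeries.constantCoeff (σ := Fin 2) (R := k)) hab) m
          have hvp : v ^ m = (MvPowerSeries.C (σ := Fin 2) (R := k) e₀ * MvPowerSeries.X 0) ^ m
              + (T * (MvPowerSeries.X 1) ^ m + MvPowerSeries.X 0 * Ω) ^ m := by
            rw [hvg]
            exact add_pow_char _ _ _
          have hvpc : MvPowerSeries.coeff (R := k)
              (Finsupp.single (0 : Fin 2) m + Finsupp.single (1 : Fin 2) 1) (v ^ m) = 0 := by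
            rw [hvp, map_add]
            have h1 : MvPowerSeries.coeff (R := k)
                (Finsupp.single (0 : Fin 2) m + Finsupp.single (1 : Fin 2) 1)
                ((MvPowerSeries.C (σ := Fin 2) (R := k) e₀ * MvPowerSeries.X 0) ^ m) = 0 := by
              rw [mul_pow, ← map_pow, MvPowerSeries.coeff_C_mul,
                MvPowerSeries.coeff_X_pow, if_neg (d1_ne_single0 m m), mul_zero]
            have h2 : MvPowerSeries.coeff (R := k)
                (Finsupp.single (0 : Fin 2) m + Finsupp.single (1 : Fin 2) 1)
                ((T * (MvPowerSeries.X 1) ^ m + MvPowerSeries.X 0 * Ω) ^ m) = 0 :=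
              (hg.pow m) _ (by rw [deg_add]; omega)
            rw [h1, h2, add_zero]
          have hεc : MvPowerSeries.coeff (R := k)
              (Finsupp.single (0 : Fin 2) m + Finsupp.single (1 : Fin 2) 1) (ε ψ) = 0 := by
            rw [hcoeff _ (m + 1) (le_of_eq (deg_add m 1))]
            apply Finset.sum_eq_zero
            intro n hn
            rw [Finset.mem_range] at hn
            rcases lt_trichotomy n m with h | h | h
            · rw [hlow n h, zero_mul]
            · subst h
              rw [hvpc, mul_zero]
            · have hn1 : n = m + 1 := by omega
              subst hn1
              rw [coeff_v_pow hvg hg (m + 1) _ (le_of_eq (deg_add m 1)),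
                if_neg (d1_ne_single0 m (m + 1)), mul_zero]
          rw [map_sub, hεc, sub_zero, hu_d1]
          exact hf
        · rw [deg_add]
          nlinarith
      · -- m > p : use x^p
        refine ⟨Finsupp.single (0 : Fin 2) p, ?_, ?_⟩
        · have hεc : MvPowerSeries.coeff (R := k) (Finsupp.single (0 : Fin 2) p) (ε ψ) = 0 := by
            rw [hcoeff _ p (by rw [s00, s01]; omega)]
            apply Finset.sum_eq_zero
            intro n hn
            rw [Finset.mem_range] at hn
            rw [hlow n (by omega), zero_mul]
          rw [map_sub, hεc, sub_zero, hu_xp]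
          exact hc
        · rw [s00, s01]
          nlinarith
    obtain ⟨dstar, hne, hdeg⟩ := key
    constructor
    · intro h0
      exact hne (by rw [h0, map_zero])
    · rintro r ⟨hrlow, -⟩
      have hrle : r ≤ dstar 0 + dstar 1 := by
        by_contra hlt
        exact hne (hrlow dstar (by omega))
      have hrpm : r < p * m := by omega
      rw [map_sub, hu_low _ (by rw [s10]; exact hp.pos), zero_sub, neg_eq_zero]
      rw [hcoeff _ r (by rw [s10, s11]; omega)]
      apply Finset.sum_eq_zero
      intro n hn
      rcases lt_or_ge n m with h | h
      · rw [hlow n h, zero_mul]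
      · rw [coeff_y_v_pow hvB n r
          (lt_of_lt_of_le hrpm (Nat.mul_le_mul_left p h)), mul_zero]
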